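/- Let 0 < μ < L and α ∈ [0, 1/2). Set m = 1 − 2α, s = 1 + 2α + 2α², L̂ = L(1 + α)/(1 − α)³, q = μ/L̂, and let a = ((m − s) + √((s − m)² + 4mq))/(2m) be the largest root of the quadratic equation m·a² + (s − m)·a − q = 0. Then 0 < a < 1. Moreover, if in addition α ≤ ((√2 − 1)/18)·√(μ/L), then a ≥ (1/10)·√(μ/L). -/

import Mathlib

lemma sqrt2_aux : (Real.sqrt 2 - 1) / 18 ≤ 3 / 100 := by
  nlinarith [Real.sq_sqrt (by norm_num : (0:ℝ) ≤ 2), Real.sqrt_nonneg 2]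

lemma poly_aux (α r : ℝ) (hα₀ : 0 ≤ α) (hαr : α ≤ 3 / 100 * r)
    (hr0 : 0 < r) (hr1 : r < 1) :
    ((1 - 2 * α) * (r / 10) ^ 2 + (1 + 2 * α + 2 * α ^ 2 - (1 - 2 * α)) * (r / 10)) * (1 + α)
      ≤ r ^ 2 * (1 - α) ^ 3 := by
  have hrr : (0:ℝ) ≤ r ^ 2 := sq_nonneg r
  have hα3 : α ≤ 3 / 100 := by nlinarith
  have harb : α * r ≤ 3 / 100 * r ^ 2 := by nlinarith [mul_le_mul_of_nonneg_right hαr hr0.le]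
  have hB : (1 + 2 * α + 2 * α ^ 2 - (1 - 2 * α)) * (r / 10) ≤ 3 / 200 * r ^ 2 := by
    nlinarith [mul_le_mul_of_nonneg_left harb hα₀, mul_le_mul_of_nonneg_right hα3 hrr,
      mul_nonneg hα₀ hr0.le, mul_nonneg (mul_nonneg hα₀ hα₀) hr0.le]
  have hA : (1 - 2 * α) * (r / 10) ^ 2 ≤ r ^ 2 / 100 := by nlinarith
  have hinner0 : 0 ≤ (1 - 2 * α) * (r / 10) ^ 2 + (1 + 2 * α + 2 * α ^ 2 - (1 - 2 * α)) * (r / 10) := by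
    have h1 : (0:ℝ) ≤ 1 - 2 * α := by linarith
    have h2 : (0:ℝ) ≤ 1 + 2 * α + 2 * α ^ 2 - (1 - 2 * α) := by nlinarith
    exact add_nonneg (mul_nonneg h1 (by positivity)) (mul_nonneg h2 (by positivity))
  have hmul : ((1 - 2 * α) * (r / 10) ^ 2 + (1 + 2 * α + 2 * α ^ 2 - (1 - 2 * α)) * (r / 10)) * (1 + α)
      ≤ (1 / 40 * r ^ 2) * (103 / 100) :=
    mul_le_mul (by linarith) (by linarith) (by linarith) (by nlinarith)
  have hpow : (97 / 100 : ℝ) ^ 3 ≤ (1 - α) ^ 3 :=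
    pow_le_pow_left₀ (by norm_num) (by linarith) 3
  nlinarith [mul_le_mul_of_nonneg_left hpow hrr]

lemma root_aux (m sm q a t : ℝ) (hm0 : 0 < m) (hsm0 : 0 ≤ sm) (ha0 : 0 < a)
    (ht0 : 0 < t) (hfa : m * a ^ 2 + sm * a = q) (hft : m * t ^ 2 + sm * t ≤ q) :
    t ≤ a := by
  by_contra h
  push_neg at h
  have h1 : 0 < m * (t + a) + sm := by positivity
  nlinarith [mul_pos (sub_pos.mpr h) h1]

/-- Lemma on the RE-AGM step-size coefficient `a`: `0 < a < 1`, and if moreover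
`α ≤ ((√2 − 1)/18)·√(μ/L)` then `a ≥ (1/10)·√(μ/L)`. -/
theorem stmt_2 (μ L α : ℝ) (hμ : 0 < μ) (hμL : μ < L)
    (hα₀ : 0 ≤ α) (hα₁ : α < 1 / 2)
    (m s Lhat q a : ℝ)
    (hm : m = 1 - 2 * α)
    (hs : s = 1 + 2 * α + 2 * α ^ 2)
    (hLhat : Lhat = L * (1 + α) / (1 - α) ^ 3)
    (hq : q = μ / Lhat)
    (ha : a = ((m - s) + Real.sqrt ((s - m) ^ 2 + 4 * m * q)) / (2 * m)) :
    (0 < a ∧ a < 1) ∧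
      (α ≤ (Real.sqrt 2 - 1) / 18 * Real.sqrt (μ / L) →
        a ≥ 1 / 10 * Real.sqrt (μ / L)) := by
  have hL : 0 < L := hμ.trans hμL
  have h1α : 0 < 1 - α := by linarith
  have h1α' : 0 < 1 + α := by linarith
  have hm0 : 0 < m := by rw [hm]; linarith
  have hsm : s - m = 4 * α + 2 * α ^ 2 := by rw [hs, hm]; ring
  have hsm0 : 0 ≤ s - m := by rw [hsm]; positivity
  have hLhat0 : 0 < Lhat := by rw [hLhat]; positivity
  have hq0 : 0 < q := by rw [hq]; positivity
  have hqs : q < s := by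
    have hqe : q = μ * (1 - α) ^ 3 / (L * (1 + α)) := by
      rw [hq, hLhat]; field_simp
    have h13 : (1 - α) ^ 3 ≤ 1 := by nlinarith
    have h1 : μ * (1 - α) ^ 3 < L * (1 + α) := by nlinarith [pow_pos h1α 3]
    have : q < 1 := by rw [hqe, div_lt_one (by positivity)]; exact h1
    nlinarith
  set D := (s - m) ^ 2 + 4 * m * q with hD
  have hD0 : 0 < D := by positivity
  have hsqD : Real.sqrt D ^ 2 = D := Real.sq_sqrt hD0.le
  have hsDnn := Real.sqrt_nonneg D
  have hDgt : s - m < Real.sqrt D := by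
    nlinarith
  have hDlt : Real.sqrt D < m + s := by
    nlinarith
  have ha0 : 0 < a := by
    rw [ha]
    apply div_pos _ (by linarith)
    linarith
  have ha1 : a < 1 := by
    rw [ha, div_lt_one (by linarith)]
    linarith
  refine ⟨⟨ha0, ha1⟩, ?_⟩
  intro hαsmall
  set r := Real.sqrt (μ / L) with hrdef
  have hr0 : 0 < r := Real.sqrt_pos.mpr (by positivity)
  have hr2 : r ^ 2 = μ / L := Real.sq_sqrt (by positivity)
  have hr1 : r < 1 := by
    rw [hrdef, show (1:ℝ) = Real.sqrt 1 by simp]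
    exact Real.sqrt_lt_sqrt (by positivity) ((div_lt_one hL).mpr hμL)
  have hc : (Real.sqrt 2 - 1) / 18 ≤ 3 / 100 := sqrt2_aux
  have hαr : α ≤ 3 / 100 * r := by
    calc α ≤ (Real.sqrt 2 - 1) / 18 * r := hαsmall
    _ ≤ 3 / 100 * r := mul_le_mul_of_nonneg_right hc hr0.le
  -- a satisfies the quadratic
  have hfa : m * a ^ 2 + (s - m) * a = q := by
    have key : 2 * m * a - (m - s) = Real.sqrt D := by
      rw [ha]; field_simp; ring
    have key2 : (2 * m * a - (m - s)) ^ 2 = D := by rw [key]; exact hsqD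
    have h4 : 4 * m * (m * a ^ 2 + (s - m) * a - q) = 0 := by
      rw [hD] at key2; linear_combination key2
    have hmne : (4 * m) ≠ 0 := by positivity
    have := mul_eq_zero.mp h4
    rcases this with h | h
    · exact absurd h hmne
    · linarith
  -- q relation to r
  have hμr : μ = r ^ 2 * L := by rw [hr2]; field_simp
  have hq1 : q * (1 + α) = r ^ 2 * (1 - α) ^ 3 := by
    rw [hq, hLhat, hμr]; field_simp
  -- f(r/10) ≤ 0
  have hft : m * (r / 10) ^ 2 + (s - m) * (r / 10) ≤ q := by
    have key : (m * (r / 10) ^ 2 + (s - m) * (r / 10)) * (1 + α) ≤ r ^ 2 * (1 - α) ^ 3 := by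
      rw [hs, hm]
      exact poly_aux α r hα₀ hαr hr0 hr1
    rw [← hq1] at key
    exact le_of_mul_le_mul_right key h1α'
  -- conclude
  have ht0 : 0 < r / 10 := by positivity
  rw [ge_iff_le, show (1:ℝ)/10 * r = r/10 by ring]
  exact root_aux m (s - m) q a (r / 10) hm0 hsm0 ha0 ht0 hfa hft
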